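/- Assume additionally D1 + D2 > σ² and D3 = D1 + D2 − σ². Then (σ² + s0)² = s1·s2, i.e. σ² + s0 − σT1·σT2 = 0. Consequently E[U1·U2] = σ² + s0 − σT1·σT2 = 0: in the no-excess-sum-rate case the two descriptions U1 and U2 are uncorrelated. -/

import Mathlib

open MeasureTheory ProbabilityTheory

lemma integrable_mul_of_memL2 {Ω : Type*} [MeasurableSpace Ω] {μ : Measure Ω}
    {f g : Ω → ℝ} (hf : MemLp f 2 μ) (hg : MemLp g 2 μ) :
    Integrable (fun ω => f ω * g ω) μ := by
  have h : MemLp (f • g) 1 μ :=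
    hg.smul hf (hpqr := ⟨by simp [ENNReal.inv_two_add_inv_two, one_div]⟩)
  exact memLp_one_iff_integrable.mp h

/-- No excess sum-rate case `D3 = D1 + D2 − σ²`: then `(σ² + s0)² = s1·s2`, i.e.
`σ² + s0 − σT1·σT2 = 0`, and consequently the two descriptions are uncorrelated:
`E[U1·U2] = 0`. -/
theorem no_excess_sum_rate_descriptions_uncorrelated
    {Ω : Type*} [MeasurableSpace Ω] (μ : Measure Ω) [IsProbabilityMeasure μ]
    (σ2 D1 D2 D3 s0 s1 s2 : ℝ)
    (hσ : 0 < σ2)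
    (hD3pos : 0 < D3) (hD3leD1 : D3 ≤ D1) (hD1 : D1 < σ2)
    (hD3leD2 : D3 ≤ D2) (hD2 : D2 < σ2)
    (hs0 : s0 = D3 * σ2 / (σ2 - D3))
    (hs1 : s1 = D1 * σ2 / (σ2 - D1) - s0)
    (hs2 : s2 = D2 * σ2 / (σ2 - D2) - s0)
    (hsum : σ2 < D1 + D2)
    (hD3 : D3 = D1 + D2 - σ2)
    (X T0 T1 T2 : Ω → ℝ)
    (hX2 : MemLp X 2 μ) (hT02 : MemLp T0 2 μ) (hT12 : MemLp T1 2 μ) (hT22 : MemLp T2 2 μ)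
    (hXmean : ∫ ω, X ω ∂μ = 0) (hT0mean : ∫ ω, T0 ω ∂μ = 0)
    (hT1mean : ∫ ω, T1 ω ∂μ = 0) (hT2mean : ∫ ω, T2 ω ∂μ = 0)
    (hXvar : ∫ ω, (X ω) ^ 2 ∂μ = σ2)
    (hT0var : ∫ ω, (T0 ω) ^ 2 ∂μ = s0)
    (hT1var : ∫ ω, (T1 ω) ^ 2 ∂μ = s1)
    (hT2var : ∫ ω, (T2 ω) ^ 2 ∂μ = s2)
    (hT1T2 : ∫ ω, T1 ω * T2 ω ∂μ = -(Real.sqrt s1 * Real.sqrt s2))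
    -- `X`, `T0` and the pair `(T1, T2)` are mutually independent
    (hIndep1 : IndepFun X T0 μ)
    (hIndep2 : IndepFun (fun ω => (X ω, T0 ω)) (fun ω => (T1 ω, T2 ω)) μ)
    (U1 U2 : Ω → ℝ)
    (hU1 : U1 = fun ω => X ω + T0 ω + T1 ω)
    (hU2 : U2 = fun ω => X ω + T0 ω + T2 ω) :
    (σ2 + s0) ^ 2 = s1 * s2 ∧
    σ2 + s0 - Real.sqrt s1 * Real.sqrt s2 = 0 ∧
    ∫ ω, U1 ω * U2 ω ∂μ = 0 := by
  have ha : (0:ℝ) < σ2 - D1 := by linarith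
  have hb : (0:ℝ) < σ2 - D2 := by linarith
  have hc : (0:ℝ) < σ2 - D3 := by linarith
  have ha' : σ2 - D1 ≠ 0 := ne_of_gt ha
  have hb' : σ2 - D2 ≠ 0 := ne_of_gt hb
  have hc' : σ2 - (D1 + D2 - σ2) ≠ 0 := by rw [← hD3]; exact ne_of_gt hc
  have hs1' : s1 = σ2 ^ 2 * (σ2 - D2) / ((σ2 - D1) * (σ2 - D3)) := by
    rw [hs1, hs0, hD3]
    field_simp
    ring
  have hs2' : s2 = σ2 ^ 2 * (σ2 - D1) / ((σ2 - D2) * (σ2 - D3)) := by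
    rw [hs2, hs0, hD3]
    field_simp
    ring
  have hs0nn : 0 ≤ s0 := by
    rw [hs0]; positivity
  have hs1nn : 0 ≤ s1 := by
    rw [hs1']; positivity
  have hs2nn : 0 ≤ s2 := by
    rw [hs2']; positivity
  have hsum0 : σ2 + s0 = σ2 ^ 2 / (σ2 - D3) := by
    rw [hs0]; field_simp; ring
  have h1 : (σ2 + s0) ^ 2 = s1 * s2 := by
    rw [hsum0, hs1', hs2', hD3]
    field_simp
  have hsumnn : 0 ≤ σ2 + s0 := by linarith
  have h2 : σ2 + s0 - Real.sqrt s1 * Real.sqrt s2 = 0 := by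
    rw [← Real.sqrt_mul hs1nn, ← h1, Real.sqrt_sq hsumnn]
    ring
  refine ⟨h1, h2, ?_⟩
  -- integrability facts
  have hS2 : MemLp (fun ω => X ω + T0 ω) 2 μ := hX2.add hT02
  have hiSS : Integrable (fun ω => (X ω + T0 ω) * (X ω + T0 ω)) μ :=
    integrable_mul_of_memL2 hS2 hS2
  have hiST2 : Integrable (fun ω => (X ω + T0 ω) * T2 ω) μ :=
    integrable_mul_of_memL2 hS2 hT22
  have hiT1S : Integrable (fun ω => T1 ω * (X ω + T0 ω)) μ :=
    integrable_mul_of_memL2 hT12 hS2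
  have hiT1T2 : Integrable (fun ω => T1 ω * T2 ω) μ :=
    integrable_mul_of_memL2 hT12 hT22
  have hiXT0 : Integrable (fun ω => X ω * T0 ω) μ :=
    integrable_mul_of_memL2 hX2 hT02
  have hiXT0' : Integrable (fun ω => 2 * (X ω * T0 ω)) μ := hiXT0.const_mul 2
  have hiX2 : Integrable (fun ω => (X ω) ^ 2) μ := hX2.integrable_sq
  have hiT02 : Integrable (fun ω => (T0 ω) ^ 2) μ := hT02.integrable_sq
  have hiX : Integrable X μ := hX2.integrable (by norm_num)
  have hiT0 : Integrable T0 μ := hT02.integrable (by norm_num)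
  -- independence consequences
  have hXT0 : ∫ ω, X ω * T0 ω ∂μ = 0 := by
    have h : (∫ ω, X ω * T0 ω ∂μ) = (∫ ω, X ω ∂μ) * ∫ ω, T0 ω ∂μ :=
      hIndep1.integral_fun_mul_eq_mul_integral hX2.aestronglyMeasurable hT02.aestronglyMeasurable
    rw [h, hXmean, zero_mul]
  have hIST1 : IndepFun (fun ω => X ω + T0 ω) T1 μ :=
    hIndep2.comp (measurable_fst.add measurable_snd) measurable_fst
  have hIST2 : IndepFun (fun ω => X ω + T0 ω) T2 μ :=
    hIndep2.comp (measurable_fst.add measurable_snd) measurable_snd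
  have hSmean : ∫ ω, (X ω + T0 ω) ∂μ = 0 := by
    rw [integral_add hiX hiT0, hXmean, hT0mean, add_zero]
  have hST2 : ∫ ω, (X ω + T0 ω) * T2 ω ∂μ = 0 := by
    have h : (∫ ω, (X ω + T0 ω) * T2 ω ∂μ)
        = (∫ ω, (X ω + T0 ω) ∂μ) * ∫ ω, T2 ω ∂μ :=
      hIST2.integral_fun_mul_eq_mul_integral hS2.aestronglyMeasurable hT22.aestronglyMeasurable
    rw [h, hSmean, zero_mul]
  have hT1S : ∫ ω, T1 ω * (X ω + T0 ω) ∂μ = 0 := by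
    have h : (∫ ω, T1 ω * (X ω + T0 ω) ∂μ)
        = (∫ ω, T1 ω ∂μ) * ∫ ω, (X ω + T0 ω) ∂μ :=
      (hIST1.symm).integral_fun_mul_eq_mul_integral hT12.aestronglyMeasurable hS2.aestronglyMeasurable
    rw [h, hT1mean, zero_mul]
  have hSS : ∫ ω, (X ω + T0 ω) * (X ω + T0 ω) ∂μ = σ2 + s0 := by
    have heq : (fun ω => (X ω + T0 ω) * (X ω + T0 ω))
        = fun ω => (X ω) ^ 2 + (2 * (X ω * T0 ω) + (T0 ω) ^ 2) := by
      funext ω; ring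
    have e1 : (∫ ω, ((X ω) ^ 2 + (2 * (X ω * T0 ω) + (T0 ω) ^ 2)) ∂μ)
        = (∫ ω, (X ω) ^ 2 ∂μ) + ∫ ω, (2 * (X ω * T0 ω) + (T0 ω) ^ 2) ∂μ :=
      integral_add hiX2 (hiXT0'.add hiT02)
    have e2 : (∫ ω, (2 * (X ω * T0 ω) + (T0 ω) ^ 2) ∂μ)
        = (∫ ω, 2 * (X ω * T0 ω) ∂μ) + ∫ ω, (T0 ω) ^ 2 ∂μ :=
      integral_add hiXT0' hiT02
    have e3 : (∫ ω, 2 * (X ω * T0 ω) ∂μ) = 2 * ∫ ω, X ω * T0 ω ∂μ :=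
      integral_const_mul 2 _
    rw [heq, e1, e2, e3, hXvar, hT0var, hXT0]
    ring
  have hexp : (fun ω => U1 ω * U2 ω)
      = fun ω => (X ω + T0 ω) * (X ω + T0 ω) + ((X ω + T0 ω) * T2 ω
          + (T1 ω * (X ω + T0 ω) + T1 ω * T2 ω)) := by
    funext ω; rw [hU1, hU2]; ring
  have e1 : (∫ ω, ((X ω + T0 ω) * (X ω + T0 ω) + ((X ω + T0 ω) * T2 ω
          + (T1 ω * (X ω + T0 ω) + T1 ω * T2 ω))) ∂μ)
      = (∫ ω, (X ω + T0 ω) * (X ω + T0 ω) ∂μ) + ∫ ω, ((X ω + T0 ω) * T2 ω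
          + (T1 ω * (X ω + T0 ω) + T1 ω * T2 ω)) ∂μ :=
    integral_add hiSS (hiST2.add (hiT1S.add hiT1T2))
  have e2 : (∫ ω, ((X ω + T0 ω) * T2 ω + (T1 ω * (X ω + T0 ω) + T1 ω * T2 ω)) ∂μ)
      = (∫ ω, (X ω + T0 ω) * T2 ω ∂μ)
          + ∫ ω, (T1 ω * (X ω + T0 ω) + T1 ω * T2 ω) ∂μ :=
    integral_add hiST2 (hiT1S.add hiT1T2)
  have e3 : (∫ ω, (T1 ω * (X ω + T0 ω) + T1 ω * T2 ω) ∂μ)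
      = (∫ ω, T1 ω * (X ω + T0 ω) ∂μ) + ∫ ω, T1 ω * T2 ω ∂μ :=
    integral_add hiT1S hiT1T2
  rw [hexp, e1, e2, e3, hSS, hST2, hT1S, hT1T2]
  linarith [h2]
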